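/- Consider Algorithm 1 option (i) under Assumptions 1 and 2 with each f_i L-smooth and local learning rate 1/(16KL) ≤ η_l ≤ 1/(8KL). Define the normalized global update d̃^t = (1/(η_l K)) d^t = (1/(NK)) ∑_{i=1}^N ∑_{k=1}^{K} g_i^{t,k−1}. Then the divergence between the normalized global update and the true global gradient is bounded as E[‖∇f(x^t) − d̃^t‖²] ≤ (15/16) E[‖∇f(x^t)‖²] + 60 L² (9σ_l² + K σ_g²) K η_l². -/

import Mathlib

open MeasureTheory ProbabilityTheory

/-- The global empirical risk `f = (1/N) ∑ᵢ fᵢ`. -/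
noncomputable def globalObjective {E : Type*} (N : ℕ) (f : Fin N → E → ℝ) : E → ℝ :=
  fun x => (N : ℝ)⁻¹ * ∑ i, f i x

section Helpers

open Finset InnerProductSpace

variable {Ω : Type*} {𝓖 : MeasurableSpace Ω} {m : MeasurableSpace Ω} {μ : Measure Ω} {dd : ℕ}

private lemma norm_sq_sum_le {E : Type*} [SeminormedAddCommGroup E] {ι : Type*}
    (s : Finset ι) (v : ι → E) :
    ‖∑ i ∈ s, v i‖ ^ 2 ≤ (s.card : ℝ) * ∑ i ∈ s, ‖v i‖ ^ 2 := by
  calc ‖∑ i ∈ s, v i‖ ^ 2 ≤ (∑ i ∈ s, ‖v i‖) ^ 2 :=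
        pow_le_pow_left₀ (norm_nonneg _) (norm_sum_le s v) 2
    _ ≤ (s.card : ℝ) * ∑ i ∈ s, ‖v i‖ ^ 2 := sq_sum_le_card_mul_sum_sq

private lemma norm_add_sq_le_two {E : Type*} [SeminormedAddCommGroup E] (a b : E) :
    ‖a + b‖ ^ 2 ≤ 2 * ‖a‖ ^ 2 + 2 * ‖b‖ ^ 2 := by
  have h := norm_add_le a b
  nlinarith [norm_nonneg a, norm_nonneg b, norm_nonneg (a + b), sq_nonneg (‖a‖ - ‖b‖)]

private lemma norm_add3_sq_le {E : Type*} [SeminormedAddCommGroup E] (a b c : E) :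
    ‖a + b + c‖ ^ 2 ≤ 3 * ‖a‖ ^ 2 + 3 * ‖b‖ ^ 2 + 3 * ‖c‖ ^ 2 := by
  have h := norm_add_le (a + b) c
  have h2 := norm_add_le a b
  nlinarith [norm_nonneg a, norm_nonneg b, norm_nonneg c, norm_nonneg (a + b + c),
    norm_nonneg (a + b), sq_nonneg (‖a‖ - ‖b‖), sq_nonneg (‖a‖ - ‖c‖), sq_nonneg (‖b‖ - ‖c‖)]

private lemma integrable_norm_sq {E : Type*} [NormedAddCommGroup E] {X : Ω → E}
    (hX : MemLp X 2 μ) : Integrable (fun ω => ‖X ω‖ ^ 2) μ :=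
  hX.norm.integrable_sq

private lemma integrable_inner2 {E : Type*} [NormedAddCommGroup E] [InnerProductSpace ℝ E]
    {X Y : Ω → E} (hX : MemLp X 2 μ) (hY : MemLp Y 2 μ) :
    Integrable (fun ω => (inner ℝ (X ω) (Y ω) : ℝ)) μ := by
  refine Integrable.mono' (((integrable_norm_sq hX).add (integrable_norm_sq hY)).div_const 2)
    (hX.1.inner hY.1) (Filter.Eventually.of_forall fun ω => ?_)
  have h1 := abs_real_inner_le_norm (X ω) (Y ω)
  have h2 := norm_nonneg (X ω); have h3 := norm_nonneg (Y ω)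
  rw [Real.norm_eq_abs]
  simp only [Pi.add_apply]
  nlinarith [sq_nonneg (‖X ω‖ - ‖Y ω‖)]

private lemma integrable_mul2 {X Y : Ω → ℝ} (hX : MemLp X 2 μ) (hY : MemLp Y 2 μ) :
    Integrable (fun ω => X ω * Y ω) μ := by
  simpa [RCLike.inner_apply, conj_trivial, mul_comm] using integrable_inner2 hX hY

private lemma condexp_coord_zero [IsFiniteMeasure μ] (h𝓖 : 𝓖 ≤ m)
    {Y : Ω → EuclideanSpace ℝ (Fin dd)} (hY : Integrable Y μ)
    (h : μ[Y|𝓖] =ᵐ[μ] 0) (c : Fin dd) :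
    μ[fun ω => Y ω c|𝓖] =ᵐ[μ] 0 := by
  have hYc : Integrable (fun ω => Y ω c) μ := by
    simpa [Function.comp] using (EuclideanSpace.proj (𝕜 := ℝ) c).integrable_comp hY
  refine ((ae_eq_condExp_of_forall_setIntegral_eq h𝓖 hYc
    (fun s _ _ => (integrable_zero _ _ _).integrableOn)
    (fun s hs hμs => ?_)
    (StronglyMeasurable.aestronglyMeasurable stronglyMeasurable_zero)).symm)
  have hYs : ∫ x in s, Y x ∂μ = 0 := by
    rw [← setIntegral_condExp h𝓖 hY hs]
    rw [setIntegral_congr_ae (h𝓖 s hs) (h.mono fun x hx _ => hx)]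
    simp
  have : ∫ x in s, Y x c ∂μ = (∫ x in s, Y x ∂μ) c := by
    exact (EuclideanSpace.proj (𝕜 := ℝ) c).integral_comp_comm hY.integrableOn
  simp [this, hYs]

private lemma integral_inner_zero [IsProbabilityMeasure μ] (h𝓖 : 𝓖 ≤ m)
    {Y Z : Ω → EuclideanSpace ℝ (Fin dd)} (hY : MemLp Y 2 μ) (hZ : MemLp Z 2 μ)
    (hZm : StronglyMeasurable[𝓖] Z) (h : μ[Y|𝓖] =ᵐ[μ] 0) :
    ∫ ω, (inner ℝ (Y ω) (Z ω) : ℝ) ∂μ = 0 := by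
  have hYint : Integrable Y μ := hY.integrable one_le_two
  have coordY : ∀ c, MemLp (fun ω => Y ω c) 2 μ := fun c => by
    simpa [Function.comp_def] using (EuclideanSpace.proj (𝕜 := ℝ) c).comp_memLp' hY
  have coordZ : ∀ c, MemLp (fun ω => Z ω c) 2 μ := fun c => by
    simpa [Function.comp_def] using (EuclideanSpace.proj (𝕜 := ℝ) c).comp_memLp' hZ
  have hinner : ∀ ω, (inner ℝ (Y ω) (Z ω) : ℝ) = ∑ c, Y ω c * Z ω c := by
    intro ω
    simp [PiLp.inner_apply, RCLike.inner_apply, conj_trivial, mul_comm]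
  simp_rw [hinner]
  rw [integral_finset_sum _ (fun c _ => integrable_mul2 (coordY c) (coordZ c))]
  refine Finset.sum_eq_zero fun c _ => ?_
  have hZc : StronglyMeasurable[𝓖] (fun ω => Z ω c) :=
    ((EuclideanSpace.proj (𝕜 := ℝ) c).continuous.comp_stronglyMeasurable hZm)
  have hprod : Integrable ((fun ω => Z ω c) * fun ω => Y ω c) μ := by
    simpa [Pi.mul_def] using integrable_mul2 (coordZ c) (coordY c)
  have hYcint : Integrable (fun ω => Y ω c) μ := (coordY c).integrable one_le_two
  have hpull := condExp_mul_of_stronglyMeasurable_left (μ := μ) hZc hprod hYcint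
  have hc0 : μ[fun ω => Y ω c|𝓖] =ᵐ[μ] 0 := condexp_coord_zero h𝓖 hYint h c
  have : μ[(fun ω => Z ω c) * fun ω => Y ω c|𝓖] =ᵐ[μ] 0 := by
    refine hpull.trans ?_
    filter_upwards [hc0] with ω hω
    simp [hω]
  calc ∫ ω, Y ω c * Z ω c ∂μ = ∫ ω, ((fun ω => Z ω c) * fun ω => Y ω c) ω ∂μ := by
        simp [mul_comm]
    _ = ∫ ω, (μ[(fun ω => Z ω c) * fun ω => Y ω c|𝓖]) ω ∂μ := (integral_condExp h𝓖).symm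
    _ = 0 := by rw [integral_congr_ae this]; simp

private lemma integral_norm_sq_sum_martingale [IsProbabilityMeasure μ]
    (𝓕 : ℕ → MeasurableSpace Ω) (h𝓕_le : ∀ k, 𝓕 k ≤ m) (h𝓕_mono : Monotone 𝓕)
    (Y : ℕ → Ω → EuclideanSpace ℝ (Fin dd))
    (hmeas : ∀ k, StronglyMeasurable[𝓕 (k + 1)] (Y k))
    (hL2 : ∀ k, MemLp (Y k) 2 μ) (hcond : ∀ k, μ[Y k|𝓕 k] =ᵐ[μ] 0) (K : ℕ) :
    ∫ ω, ‖∑ k ∈ range K, Y k ω‖ ^ 2 ∂μ = ∑ k ∈ range K, ∫ ω, ‖Y k ω‖ ^ 2 ∂μ := by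
  have expand : ∀ ω, ‖∑ k ∈ range K, Y k ω‖ ^ 2
      = ∑ j ∈ range K, ∑ k ∈ range K, (inner ℝ (Y j ω) (Y k ω) : ℝ) := by
    intro ω
    rw [← real_inner_self_eq_norm_sq, sum_inner]
    exact Finset.sum_congr rfl fun j _ => inner_sum _ _ _
  simp_rw [expand]
  rw [integral_finset_sum _ (fun j _ => integrable_finset_sum _
    (fun k _ => integrable_inner2 (hL2 j) (hL2 k)))]
  have key : ∀ j k : ℕ, j ≠ k → ∫ ω, (inner ℝ (Y j ω) (Y k ω) : ℝ) ∂μ = 0 := by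
    intro j k hjk
    rcases lt_or_gt_of_ne hjk with hlt | hgt
    · have hsm : StronglyMeasurable[𝓕 k] (Y j) :=
        (hmeas j).mono (h𝓕_mono hlt)
      have := integral_inner_zero (h𝓕_le k) (hL2 k) (hL2 j) hsm (hcond k)
      rw [← this]
      exact integral_congr_ae (Filter.Eventually.of_forall fun ω => real_inner_comm _ _)
    · have hsm : StronglyMeasurable[𝓕 j] (Y k) :=
        (hmeas k).mono (h𝓕_mono hgt)
      exact integral_inner_zero (h𝓕_le j) (hL2 j) (hL2 k) hsm (hcond j)
  refine Finset.sum_congr rfl fun j hj => ?_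
  rw [integral_finset_sum _ (fun k _ => integrable_inner2 (hL2 j) (hL2 k))]
  rw [Finset.sum_eq_single_of_mem j hj (fun k _ hkj => key j k (Ne.symm hkj))]
  exact integral_congr_ae (Filter.Eventually.of_forall fun ω => real_inner_self_eq_norm_sq _)

private lemma gradient_global {N : ℕ} (f : Fin N → EuclideanSpace ℝ (Fin dd) → ℝ)
    (hdiff : ∀ i, Differentiable ℝ (f i)) (x : EuclideanSpace ℝ (Fin dd)) :
    gradient (globalObjective N f) x = (N : ℝ)⁻¹ • ∑ i, gradient (f i) x := by
  have h1 : HasFDerivAt (fun y => ∑ i, f i y) (∑ i, fderiv ℝ (f i) x) x :=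
    HasFDerivAt.fun_sum (fun i _ => (hdiff i x).hasFDerivAt)
  have h2 : HasFDerivAt (globalObjective N f) ((N : ℝ)⁻¹ • ∑ i, fderiv ℝ (f i) x) x := by
    exact h1.const_mul ((N : ℝ)⁻¹)
  have hg : HasGradientAt (globalObjective N f)
      ((N : ℝ)⁻¹ • ∑ i, gradient (f i) x) x := by
    rw [hasGradientAt_iff_hasFDerivAt]
    refine h2.congr_fderiv (Eq.symm ?_)
    rw [_root_.map_smul, map_sum]
    congr 1
    refine Finset.sum_congr rfl fun i _ => ?_
    show toDual ℝ _ (gradient (f i) x) = fderiv ℝ (f i) x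
    rw [gradient]
    exact (toDual ℝ _).apply_symm_apply _
  exact hg.gradient

private lemma lipschitz_gradient {φ : EuclideanSpace ℝ (Fin dd) → ℝ} {L : ℝ} (hL : 0 ≤ L)
    (hsm : ∀ x y, ‖gradient φ x - gradient φ y‖ ≤ L * ‖x - y‖) :
    LipschitzWith (Real.toNNReal L) (gradient φ) :=
  LipschitzWith.of_dist_le_mul fun a b => by
    rw [dist_eq_norm, dist_eq_norm, Real.coe_toNNReal L hL]; exact hsm a b

private lemma memℒp_gradient_comp [IsFiniteMeasure μ] {φ : EuclideanSpace ℝ (Fin dd) → ℝ}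
    {L : ℝ} (hL : 0 ≤ L)
    (hsm : ∀ x y, ‖gradient φ x - gradient φ y‖ ≤ L * ‖x - y‖)
    {X : Ω → EuclideanSpace ℝ (Fin dd)} (hX : MemLp X 2 μ) :
    MemLp (fun ω => gradient φ (X ω)) 2 μ := by
  have hlip : LipschitzWith (Real.toNNReal L) (fun v => gradient φ v - gradient φ 0) :=
    LipschitzWith.of_dist_le_mul fun a b => by
      rw [dist_sub_right]
      exact (lipschitz_gradient hL hsm).dist_le_mul a b
  have h1 : MemLp ((fun v => gradient φ v - gradient φ 0) ∘ X) 2 μ :=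
    hlip.comp_memLp (by simp) hX
  have h2 := h1.add (memLp_const (gradient φ 0))
  have : (fun ω => gradient φ (X ω))
      = ((fun v => gradient φ v - gradient φ 0) ∘ X) + fun _ => gradient φ 0 := by
    funext ω; simp [Function.comp]
  rw [this]; exact h2

end Helpers

set_option maxHeartbeats 2000000 in
theorem bounded_divergence_of_global_update
    {dd N K : ℕ} (hN : 0 < N) (hK : 0 < K)
    {Ω : Type*} [m : MeasurableSpace Ω] (μ : Measure Ω) [IsProbabilityMeasure μ]
    (f : Fin N → EuclideanSpace ℝ (Fin dd) → ℝ) (L σl σg ηl : ℝ) (hL : 0 < L)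
    (hdiff : ∀ i, Differentiable ℝ (f i))
    (hsmooth : ∀ i x y, ‖gradient (f i) x - gradient (f i) y‖ ≤ L * ‖x - y‖)
    (hA2 : ∀ i x, ‖gradient (f i) x - gradient (globalObjective N f) x‖ ^ 2 ≤ σg ^ 2)
    (hηl_lb : 1 / (16 * K * L) ≤ ηl) (hηl_ub : ηl ≤ 1 / (8 * K * L))
    (x0 : Ω → EuclideanSpace ℝ (Fin dd))
    (xloc : Fin N → ℕ → Ω → EuclideanSpace ℝ (Fin dd))
    (g : Fin N → ℕ → Ω → EuclideanSpace ℝ (Fin dd))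
    (𝓕 : ℕ → MeasurableSpace Ω) (h𝓕_le : ∀ k, 𝓕 k ≤ m) (h𝓕_mono : Monotone 𝓕)
    (hx0_meas : StronglyMeasurable[𝓕 0] x0) (hx0_L2 : MemLp x0 2 μ)
    (hxloc_meas : ∀ i k, StronglyMeasurable[𝓕 k] (xloc i k))
    (hxloc_L2 : ∀ i k, MemLp (xloc i k) 2 μ)
    (hg_L2 : ∀ i k, MemLp (g i k) 2 μ)
    (hinit : ∀ i, xloc i 0 = x0)
    (hupdate : ∀ i k ω, xloc i (k + 1) ω = xloc i k ω - ηl • g i k ω)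
    (hA1_unbiased : ∀ i k, μ[g i k|𝓕 k] =ᵐ[μ] fun ω => gradient (f i) (xloc i k ω))
    (hA1_var : ∀ i k, ∫ ω, ‖g i k ω - gradient (f i) (xloc i k ω)‖ ^ 2 ∂μ ≤ σl ^ 2) :
    ∫ ω, ‖gradient (globalObjective N f) (x0 ω)
        - ((N : ℝ) * K)⁻¹ • ∑ i, ∑ k ∈ Finset.range K, g i k ω‖ ^ 2 ∂μ ≤
      (15 / 16) * ∫ ω, ‖gradient (globalObjective N f) (x0 ω)‖ ^ 2 ∂μ
        + 60 * L ^ 2 * (9 * σl ^ 2 + K * σg ^ 2) * K * ηl ^ 2 := by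
  classical
  open Finset in
  have hL0 : (0:ℝ) ≤ L := hL.le
  have hKpos : (0:ℝ) < K := by exact_mod_cast hK
  have hNpos : (0:ℝ) < N := by exact_mod_cast hN
  have hηl_pos : 0 < ηl := lt_of_lt_of_le (by positivity) hηl_lb
  -- scaled learning-rate bounds
  have hT_ub : (K:ℝ) * L * ηl ≤ 1 / 8 := by
    rw [le_div_iff₀ (show (0:ℝ) < 8 * K * L by positivity)] at hηl_ub
    nlinarith
  have hT_lb : (1:ℝ) / 16 ≤ (K:ℝ) * L * ηl := by
    rw [div_le_iff₀ (show (0:ℝ) < 16 * K * L by positivity)] at hηl_lb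
    nlinarith
  -- ℒ² and measurability bank
  have hgrad_L2 : ∀ (i : Fin N) (X : Ω → EuclideanSpace ℝ (Fin dd)), MemLp X 2 μ →
      MemLp (fun ω => gradient (f i) (X ω)) 2 μ :=
    fun i X hX => memℒp_gradient_comp hL0 (hsmooth i) hX
  have hgrad_SM : ∀ (i : Fin N) {mm : MeasurableSpace Ω} (X : Ω → EuclideanSpace ℝ (Fin dd)),
      StronglyMeasurable[mm] X → StronglyMeasurable[mm] (fun ω => gradient (f i) (X ω)) :=
    fun i mm X hX => (lipschitz_gradient hL0 (hsmooth i)).continuous.comp_stronglyMeasurable hX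
  -- noise facts
  have hgradloc_L2 : ∀ i k, MemLp (fun ω => gradient (f i) (xloc i k ω)) 2 μ :=
    fun i k => hgrad_L2 i _ (hxloc_L2 i k)
  have hnoise_L2 : ∀ i k, MemLp (fun ω => g i k ω - gradient (f i) (xloc i k ω)) 2 μ :=
    fun i k => (hg_L2 i k).sub (hgradloc_L2 i k)
  have hg_eq : ∀ i k, g i k = fun ω => ηl⁻¹ • (xloc i k ω - xloc i (k+1) ω) := by
    intro i k; funext ω
    rw [hupdate i k ω, sub_sub_cancel, smul_smul, inv_mul_cancel₀ hηl_pos.ne', one_smul]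
  have hg_SM : ∀ i k, StronglyMeasurable[𝓕 (k+1)] (g i k) := by
    intro i k; rw [hg_eq i k]
    exact (((hxloc_meas i k).mono (h𝓕_mono (Nat.le_succ k))).sub
      (hxloc_meas i (k+1))).const_smul ηl⁻¹
  have hnoise_SM : ∀ i k, StronglyMeasurable[𝓕 (k+1)]
      (fun ω => g i k ω - gradient (f i) (xloc i k ω)) :=
    fun i k => (hg_SM i k).sub
      ((hgrad_SM i _ (hxloc_meas i k)).mono (h𝓕_mono (Nat.le_succ k)))
  have hnoise_cond : ∀ i k,
      μ[fun ω => g i k ω - gradient (f i) (xloc i k ω)|𝓕 k] =ᵐ[μ] 0 := by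
    intro i k
    have hgi : Integrable (g i k) μ := (hg_L2 i k).integrable one_le_two
    have hgr : Integrable (fun ω => gradient (f i) (xloc i k ω)) μ :=
      (hgradloc_L2 i k).integrable one_le_two
    have hsub := condExp_sub (μ := μ) (m := 𝓕 k) hgi hgr
    have heq : μ[fun ω => gradient (f i) (xloc i k ω)|𝓕 k]
        = fun ω => gradient (f i) (xloc i k ω) :=
      condExp_of_stronglyMeasurable (h𝓕_le k) (hgrad_SM i _ (hxloc_meas i k)) hgr
    have hrw : (fun ω => g i k ω - gradient (f i) (xloc i k ω))
        = g i k - fun ω => gradient (f i) (xloc i k ω) := rfl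
    rw [hrw]
    refine hsub.trans ?_
    filter_upwards [hA1_unbiased i k] with ω h2
    simp only [Pi.sub_apply, heq, h2, Pi.zero_apply, sub_self]
  -- per-k aggregated noise
  have hY_L2 : ∀ k, MemLp (fun ω => ∑ i, (g i k ω - gradient (f i) (xloc i k ω))) 2 μ :=
    fun k => memLp_finset_sum univ (fun i _ => hnoise_L2 i k)
  have hY_SM : ∀ k, StronglyMeasurable[𝓕 (k+1)]
      (fun ω => ∑ i, (g i k ω - gradient (f i) (xloc i k ω))) :=
    fun k => Finset.stronglyMeasurable_fun_sum univ (fun i _ => hnoise_SM i k)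
  have hY_cond : ∀ k,
      μ[fun ω => ∑ i, (g i k ω - gradient (f i) (xloc i k ω))|𝓕 k] =ᵐ[μ] 0 := by
    intro k
    have hrw : (fun ω => ∑ i, (g i k ω - gradient (f i) (xloc i k ω)))
        = ∑ i, (fun ω => g i k ω - gradient (f i) (xloc i k ω)) := by
      funext ω; simp
    rw [hrw]
    have hsum := condExp_finset_sum (μ := μ) (m := 𝓕 k)
      (fun i (_ : i ∈ univ) => (hnoise_L2 i k).integrable one_le_two)
    refine hsum.trans ?_
    have hall : ∀ᵐ ω ∂μ, ∀ i : Fin N,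
        (μ[fun ω => g i k ω - gradient (f i) (xloc i k ω)|𝓕 k]) ω
          = (0 : Ω → EuclideanSpace ℝ (Fin dd)) ω :=
      ae_all_iff.2 (fun i => hnoise_cond i k)
    filter_upwards [hall] with ω hω
    simp only [Finset.sum_apply, Pi.zero_apply] at hω ⊢
    simp [hω]
  -- aggregated noise variance bounds
  have hYk_bound : ∀ k, ∫ ω, ‖∑ i, (g i k ω - gradient (f i) (xloc i k ω))‖ ^ 2 ∂μ
      ≤ (N:ℝ) ^ 2 * σl ^ 2 := by
    intro k
    have hmono : ∫ ω, ‖∑ i, (g i k ω - gradient (f i) (xloc i k ω))‖ ^ 2 ∂μ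
        ≤ ∫ ω, (N:ℝ) * ∑ i, ‖g i k ω - gradient (f i) (xloc i k ω)‖ ^ 2 ∂μ := by
      refine integral_mono (integrable_norm_sq (hY_L2 k))
        ((integrable_finset_sum _ (fun i _ => integrable_norm_sq (hnoise_L2 i k))).const_mul _)
        (fun ω => ?_)
      simpa using norm_sq_sum_le univ (fun i => g i k ω - gradient (f i) (xloc i k ω))
    refine hmono.trans ?_
    rw [integral_const_mul, integral_finset_sum _
      (fun i _ => integrable_norm_sq (hnoise_L2 i k))]
    have : ∑ i : Fin N, ∫ ω, ‖g i k ω - gradient (f i) (xloc i k ω)‖ ^ 2 ∂μ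
        ≤ ∑ _i : Fin N, σl ^ 2 := Finset.sum_le_sum (fun i _ => hA1_var i k)
    calc (N:ℝ) * ∑ i : Fin N, ∫ ω, ‖g i k ω - gradient (f i) (xloc i k ω)‖ ^ 2 ∂μ
        ≤ (N:ℝ) * ∑ _i : Fin N, σl ^ 2 := by
          exact mul_le_mul_of_nonneg_left this hNpos.le
      _ = (N:ℝ) ^ 2 * σl ^ 2 := by simp [Finset.sum_const]; ring
  have hA : ∫ ω, ‖∑ k ∈ range K, ∑ i, (g i k ω - gradient (f i) (xloc i k ω))‖ ^ 2 ∂μ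
      ≤ (K:ℝ) * ((N:ℝ) ^ 2 * σl ^ 2) := by
    rw [integral_norm_sq_sum_martingale 𝓕 h𝓕_le h𝓕_mono
      (fun k ω => ∑ i, (g i k ω - gradient (f i) (xloc i k ω))) hY_SM hY_L2 hY_cond K]
    calc ∑ k ∈ range K, ∫ ω, ‖∑ i, (g i k ω - gradient (f i) (xloc i k ω))‖ ^ 2 ∂μ
        ≤ ∑ _k ∈ range K, (N:ℝ) ^ 2 * σl ^ 2 :=
          Finset.sum_le_sum (fun k _ => hYk_bound k)
      _ = (K:ℝ) * ((N:ℝ) ^ 2 * σl ^ 2) := by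
          simp [Finset.sum_const, Finset.card_range]
  have hA_i : ∀ i k, ∫ ω, ‖∑ j ∈ range k, (g i j ω - gradient (f i) (xloc i j ω))‖ ^ 2 ∂μ
      ≤ (k:ℝ) * σl ^ 2 := by
    intro i k
    rw [integral_norm_sq_sum_martingale 𝓕 h𝓕_le h𝓕_mono
      (fun j ω => g i j ω - gradient (f i) (xloc i j ω)) (hnoise_SM i) (hnoise_L2 i)
      (hnoise_cond i) k]
    calc ∑ j ∈ range k, ∫ ω, ‖g i j ω - gradient (f i) (xloc i j ω)‖ ^ 2 ∂μ
        ≤ ∑ _j ∈ range k, σl ^ 2 := Finset.sum_le_sum (fun j _ => hA1_var i j)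
      _ = (k:ℝ) * σl ^ 2 := by simp [Finset.sum_const, Finset.card_range]
  -- local iterate formula
  have hxform : ∀ i k ω, xloc i k ω - x0 ω = -(ηl • ∑ j ∈ range k, g i j ω) := by
    intro i k
    induction k with
    | zero => intro ω; simp [hinit i]
    | succ k ih =>
      intro ω
      have h1 := ih ω
      rw [hupdate i k ω, Finset.sum_range_succ, smul_add, neg_add, ← h1]
      abel
  have hdiffx_L2 : ∀ i k, MemLp (fun ω => xloc i k ω - x0 ω) 2 μ :=
    fun i k => (hxloc_L2 i k).sub hx0_L2
  have hsplit : ∀ i k ω, ∑ j ∈ range k, g i j ω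
      = (∑ j ∈ range k, (g i j ω - gradient (f i) (xloc i j ω)))
        + ∑ j ∈ range k, gradient (f i) (xloc i j ω) := by
    intro i k ω; rw [← Finset.sum_add_distrib]; simp
  have hgradsum_L2 : ∀ i k, MemLp (fun ω => ∑ j ∈ range k, gradient (f i) (xloc i j ω)) 2 μ :=
    fun i k => memLp_finset_sum _ (fun j _ => hgradloc_L2 i j)
  have hnoisesum_L2 : ∀ i k, MemLp
      (fun ω => ∑ j ∈ range k, (g i j ω - gradient (f i) (xloc i j ω))) 2 μ :=
    fun i k => memLp_finset_sum _ (fun j _ => hnoise_L2 i j)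
  have hgsum_L2 : ∀ i k, MemLp (fun ω => ∑ j ∈ range k, g i j ω) 2 μ :=
    fun i k => memLp_finset_sum _ (fun j _ => hg_L2 i j)
  -- one-step local drift bound
  have hestep : ∀ i k, ∫ ω, ‖xloc i k ω - x0 ω‖ ^ 2 ∂μ
      ≤ ηl ^ 2 * (2 * ((k:ℝ) * σl ^ 2)
        + 2 * ((k:ℝ) * ∑ j ∈ range k, ∫ ω, ‖gradient (f i) (xloc i j ω)‖ ^ 2 ∂μ)) := by
    intro i k
    have hpt : ∀ ω, ‖xloc i k ω - x0 ω‖ ^ 2 = ηl ^ 2 * ‖∑ j ∈ range k, g i j ω‖ ^ 2 := by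
      intro ω
      rw [hxform i k ω, norm_neg, norm_smul, Real.norm_eq_abs, abs_of_pos hηl_pos, mul_pow]
    have hg2 : ∫ ω, ‖∑ j ∈ range k, gradient (f i) (xloc i j ω)‖ ^ 2 ∂μ
        ≤ (k:ℝ) * ∑ j ∈ range k, ∫ ω, ‖gradient (f i) (xloc i j ω)‖ ^ 2 ∂μ := by
      have hmono := integral_mono (μ := μ) (integrable_norm_sq (hgradsum_L2 i k))
        ((integrable_finset_sum _ (fun j _ => integrable_norm_sq (hgradloc_L2 i j))).const_mul
          ((k:ℝ)))
        (fun ω => by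
          simpa [Finset.card_range] using
            norm_sq_sum_le (range k) (fun j => gradient (f i) (xloc i j ω)))
      rwa [integral_const_mul, integral_finset_sum _
        (fun j _ => integrable_norm_sq (hgradloc_L2 i j))] at hmono
    have hn2 := hA_i i k
    have hsplit2 : ∫ ω, ‖∑ j ∈ range k, g i j ω‖ ^ 2 ∂μ
        ≤ 2 * ∫ ω, ‖∑ j ∈ range k, (g i j ω - gradient (f i) (xloc i j ω))‖ ^ 2 ∂μ
          + 2 * ∫ ω, ‖∑ j ∈ range k, gradient (f i) (xloc i j ω)‖ ^ 2 ∂μ := by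
      have hi1 : Integrable (fun ω =>
          2 * ‖∑ j ∈ range k, (g i j ω - gradient (f i) (xloc i j ω))‖ ^ 2
            + 2 * ‖∑ j ∈ range k, gradient (f i) (xloc i j ω)‖ ^ 2) μ := by
        exact ((integrable_norm_sq (hnoisesum_L2 i k)).const_mul 2).add
          ((integrable_norm_sq (hgradsum_L2 i k)).const_mul 2)
      have hmono := integral_mono (μ := μ) (integrable_norm_sq (hgsum_L2 i k)) hi1
        (fun ω => by
          rw [hsplit i k ω]
          exact norm_add_sq_le_two _ _)
      rwa [integral_add ((integrable_norm_sq (hnoisesum_L2 i k)).const_mul 2)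
        ((integrable_norm_sq (hgradsum_L2 i k)).const_mul 2),
        integral_const_mul, integral_const_mul] at hmono
    calc ∫ ω, ‖xloc i k ω - x0 ω‖ ^ 2 ∂μ
        = ηl ^ 2 * ∫ ω, ‖∑ j ∈ range k, g i j ω‖ ^ 2 ∂μ := by
          simp_rw [hpt]; exact integral_const_mul _ _
      _ ≤ ηl ^ 2 * (2 * ((k:ℝ) * σl ^ 2)
          + 2 * ((k:ℝ) * ∑ j ∈ range k, ∫ ω, ‖gradient (f i) (xloc i j ω)‖ ^ 2 ∂μ)) := by
          have h := hsplit2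
          nlinarith [sq_nonneg ηl, hn2, hg2]
  -- global gradient facts
  have hF0_eq : (fun ω => gradient (globalObjective N f) (x0 ω))
      = fun ω => (N:ℝ)⁻¹ • ∑ i, gradient (f i) (x0 ω) :=
    funext fun ω => gradient_global f hdiff (x0 ω)
  have hF0_L2 : MemLp (fun ω => gradient (globalObjective N f) (x0 ω)) 2 μ := by
    rw [hF0_eq]
    exact (memLp_finset_sum univ (fun i _ => hgrad_L2 i _ hx0_L2)).const_smul ((N:ℝ)⁻¹)
  have hGnn : 0 ≤ ∫ ω, ‖gradient (globalObjective N f) (x0 ω)‖ ^ 2 ∂μ :=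
    integral_nonneg (fun ω => sq_nonneg _)
  have henn : ∀ i k, 0 ≤ ∫ ω, ‖xloc i k ω - x0 ω‖ ^ 2 ∂μ :=
    fun i k => integral_nonneg (fun ω => sq_nonneg _)
  -- bound on local gradient second moment
  have hgradbound : ∀ i j, ∫ ω, ‖gradient (f i) (xloc i j ω)‖ ^ 2 ∂μ
      ≤ 3 * (L ^ 2 * ∫ ω, ‖xloc i j ω - x0 ω‖ ^ 2 ∂μ) + 3 * σg ^ 2
        + 3 * ∫ ω, ‖gradient (globalObjective N f) (x0 ω)‖ ^ 2 ∂μ := by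
    intro i j
    have hpt : ∀ ω, ‖gradient (f i) (xloc i j ω)‖ ^ 2
        ≤ 3 * (L ^ 2 * ‖xloc i j ω - x0 ω‖ ^ 2) + 3 * σg ^ 2
          + 3 * ‖gradient (globalObjective N f) (x0 ω)‖ ^ 2 := by
      intro ω
      have h3 := norm_add3_sq_le
        (gradient (f i) (xloc i j ω) - gradient (f i) (x0 ω))
        (gradient (f i) (x0 ω) - gradient (globalObjective N f) (x0 ω))
        (gradient (globalObjective N f) (x0 ω))
      rw [sub_add_sub_cancel, sub_add_cancel] at h3
      have hd := hsmooth i (xloc i j ω) (x0 ω)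
      have hd2 : ‖gradient (f i) (xloc i j ω) - gradient (f i) (x0 ω)‖ ^ 2
          ≤ L ^ 2 * ‖xloc i j ω - x0 ω‖ ^ 2 := by
        have := pow_le_pow_left₀ (norm_nonneg _) hd 2
        rwa [mul_pow] at this
      have hh := hA2 i (x0 ω)
      linarith
    have hi1 : Integrable (fun ω =>
        3 * (L ^ 2 * ‖xloc i j ω - x0 ω‖ ^ 2) + 3 * σg ^ 2
          + 3 * ‖gradient (globalObjective N f) (x0 ω)‖ ^ 2) μ := by
      exact ((((integrable_norm_sq (hdiffx_L2 i j)).const_mul (L ^ 2)).const_mul 3).add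
        (integrable_const _)).add ((integrable_norm_sq hF0_L2).const_mul 3)
    have hmono := integral_mono (μ := μ) (integrable_norm_sq (hgradloc_L2 i j)) hi1
      (fun ω => hpt ω)
    have hiA : Integrable (fun ω =>
        3 * (L ^ 2 * ‖xloc i j ω - x0 ω‖ ^ 2) + 3 * σg ^ 2) μ := by
      exact (((integrable_norm_sq (hdiffx_L2 i j)).const_mul (L ^ 2)).const_mul 3).add
        (integrable_const _)
    have hiB : Integrable (fun ω =>
        3 * ‖gradient (globalObjective N f) (x0 ω)‖ ^ 2) μ := by
      exact (integrable_norm_sq hF0_L2).const_mul 3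
    have hiC : Integrable (fun ω => 3 * (L ^ 2 * ‖xloc i j ω - x0 ω‖ ^ 2)) μ := by
      exact ((integrable_norm_sq (hdiffx_L2 i j)).const_mul (L ^ 2)).const_mul 3
    rwa [integral_add hiA hiB, integral_add hiC (integrable_const _),
      integral_const_mul, integral_const_mul, integral_const_mul, integral_const_mul,
      integral_const, probReal_univ, smul_eq_mul, one_mul] at hmono
  -- summed local drift bound
  have hsq64 : ((K:ℝ) * L * ηl) ^ 2 ≤ 1 / 64 := by nlinarith [hT_ub, hT_lb]
  have hSbound : ∀ i, ∑ k ∈ range K, ∫ ω, ‖xloc i k ω - x0 ω‖ ^ 2 ∂μ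
      ≤ 4 * ηl ^ 2 * (K:ℝ) ^ 2 * σl ^ 2 + 12 * ηl ^ 2 * (K:ℝ) ^ 3 * (σg ^ 2
        + ∫ ω, ‖gradient (globalObjective N f) (x0 ω)‖ ^ 2 ∂μ) := by
    intro i
    set G := ∫ ω, ‖gradient (globalObjective N f) (x0 ω)‖ ^ 2 ∂μ with hGdef
    set S := ∑ k ∈ range K, ∫ ω, ‖xloc i k ω - x0 ω‖ ^ 2 ∂μ with hSdef
    have hSnn : 0 ≤ S := Finset.sum_nonneg fun k _ => henn i k
    have hek : ∀ k ∈ range K, ∫ ω, ‖xloc i k ω - x0 ω‖ ^ 2 ∂μ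
        ≤ ηl ^ 2 * (2 * ((K:ℝ) * σl ^ 2)
          + 2 * ((K:ℝ) * (3 * L ^ 2 * S + (K:ℝ) * (3 * σg ^ 2 + 3 * G)))) := by
      intro k hk
      have hkK : (k:ℝ) ≤ (K:ℝ) := by exact_mod_cast (Finset.mem_range.1 hk).le
      have hss : ∑ j ∈ range k, ∫ ω, ‖xloc i j ω - x0 ω‖ ^ 2 ∂μ ≤ S := by
        rw [hSdef]
        exact Finset.sum_le_sum_of_subset_of_nonneg
          (Finset.range_subset_range.mpr (Finset.mem_range.1 hk).le) (fun j _ _ => henn i j)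
      have hTk : ∑ j ∈ range k, ∫ ω, ‖gradient (f i) (xloc i j ω)‖ ^ 2 ∂μ
          ≤ 3 * L ^ 2 * S + (K:ℝ) * (3 * σg ^ 2 + 3 * G) := by
        calc ∑ j ∈ range k, ∫ ω, ‖gradient (f i) (xloc i j ω)‖ ^ 2 ∂μ
            ≤ ∑ j ∈ range k, (3 * (L ^ 2 * ∫ ω, ‖xloc i j ω - x0 ω‖ ^ 2 ∂μ)
              + (3 * σg ^ 2 + 3 * G)) :=
              Finset.sum_le_sum (fun j _ => by linarith [hgradbound i j])
          _ = (∑ j ∈ range k, 3 * (L ^ 2 * ∫ ω, ‖xloc i j ω - x0 ω‖ ^ 2 ∂μ))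
              + (k:ℝ) * (3 * σg ^ 2 + 3 * G) := by
              rw [Finset.sum_add_distrib, Finset.sum_const, Finset.card_range, nsmul_eq_mul]
          _ = 3 * L ^ 2 * (∑ j ∈ range k, ∫ ω, ‖xloc i j ω - x0 ω‖ ^ 2 ∂μ)
              + (k:ℝ) * (3 * σg ^ 2 + 3 * G) := by
              rw [Finset.mul_sum]
              congr 1
              exact Finset.sum_congr rfl (fun j _ => by ring)
          _ ≤ 3 * L ^ 2 * S + (K:ℝ) * (3 * σg ^ 2 + 3 * G) := by
              refine add_le_add (mul_le_mul_of_nonneg_left hss (by positivity))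
                (mul_le_mul_of_nonneg_right hkK ?_)
              have := sq_nonneg σg
              linarith [hGnn]
      have he := hestep i k
      refine he.trans ?_
      apply mul_le_mul_of_nonneg_left _ (sq_nonneg ηl)
      have hTknn : 0 ≤ ∑ j ∈ range k, ∫ ω, ‖gradient (f i) (xloc i j ω)‖ ^ 2 ∂μ :=
        Finset.sum_nonneg fun j _ => integral_nonneg (fun ω => sq_nonneg _)
      have h1 : (k:ℝ) * σl ^ 2 ≤ (K:ℝ) * σl ^ 2 :=
        mul_le_mul_of_nonneg_right hkK (sq_nonneg σl)
      have h2 : (k:ℝ) * (∑ j ∈ range k, ∫ ω, ‖gradient (f i) (xloc i j ω)‖ ^ 2 ∂μ)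
          ≤ (K:ℝ) * (3 * L ^ 2 * S + (K:ℝ) * (3 * σg ^ 2 + 3 * G)) := by
        nlinarith [mul_nonneg (sub_nonneg.2 hkK) hTknn,
          mul_nonneg (le_trans (Nat.cast_nonneg k) hkK) (sub_nonneg.2 hTk)]
      linarith
    have hsum : S ≤ (K:ℝ) * (ηl ^ 2 * (2 * ((K:ℝ) * σl ^ 2)
        + 2 * ((K:ℝ) * (3 * L ^ 2 * S + (K:ℝ) * (3 * σg ^ 2 + 3 * G))))) := by
      calc S ≤ ∑ _k ∈ range K, ηl ^ 2 * (2 * ((K:ℝ) * σl ^ 2)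
          + 2 * ((K:ℝ) * (3 * L ^ 2 * S + (K:ℝ) * (3 * σg ^ 2 + 3 * G)))) :=
            Finset.sum_le_sum hek
        _ = _ := by rw [Finset.sum_const, Finset.card_range, nsmul_eq_mul]
    have hquad : ((K:ℝ) * L * ηl) ^ 2 * S ≤ (1 / 64) * S :=
      mul_le_mul_of_nonneg_right hsq64 hSnn
    have hAnn1 : 0 ≤ ηl ^ 2 * (K:ℝ) ^ 2 * σl ^ 2 := by positivity
    have hAnn2 : 0 ≤ ηl ^ 2 * (K:ℝ) ^ 3 * (σg ^ 2 + G) := by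
      refine mul_nonneg (by positivity) ?_
      linarith [sq_nonneg σg, hGnn]
    nlinarith [hsum, hquad, hSnn, hAnn1, hAnn2]
  -- drift facts
  have hdrift_L2 : ∀ i k, MemLp
      (fun ω => gradient (f i) (xloc i k ω) - gradient (f i) (x0 ω)) 2 μ :=
    fun i k => (hgradloc_L2 i k).sub (hgrad_L2 i _ hx0_L2)
  have hdriftint : ∀ i k, ∫ ω, ‖gradient (f i) (xloc i k ω) - gradient (f i) (x0 ω)‖ ^ 2 ∂μ
      ≤ L ^ 2 * ∫ ω, ‖xloc i k ω - x0 ω‖ ^ 2 ∂μ := by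
    intro i k
    have hmono := integral_mono (μ := μ) (integrable_norm_sq (hdrift_L2 i k))
      ((integrable_norm_sq (hdiffx_L2 i k)).const_mul (L ^ 2)) (fun ω => by
        have := pow_le_pow_left₀ (norm_nonneg _) (hsmooth i (xloc i k ω) (x0 ω)) 2
        rwa [mul_pow] at this)
    rwa [integral_const_mul] at hmono
  have hdriftsum_i_L2 : ∀ i, MemLp (fun ω => ∑ k ∈ range K,
      (gradient (f i) (xloc i k ω) - gradient (f i) (x0 ω))) 2 μ :=
    fun i => memLp_finset_sum _ (fun k _ => hdrift_L2 i k)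
  have hdriftsum_L2 : MemLp (fun ω => ∑ i, ∑ k ∈ range K,
      (gradient (f i) (xloc i k ω) - gradient (f i) (x0 ω))) 2 μ :=
    memLp_finset_sum _ (fun i _ => hdriftsum_i_L2 i)
  -- total drift bound
  have hB : ∫ ω, ‖∑ i, ∑ k ∈ range K,
        (gradient (f i) (xloc i k ω) - gradient (f i) (x0 ω))‖ ^ 2 ∂μ
      ≤ (N:ℝ) * (K:ℝ) * ∑ i, ∑ k ∈ range K,
        ∫ ω, ‖gradient (f i) (xloc i k ω) - gradient (f i) (x0 ω)‖ ^ 2 ∂μ := by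
    have hint2 : Integrable (fun ω => (N:ℝ) * (K:ℝ) * ∑ i, ∑ k ∈ range K,
        ‖gradient (f i) (xloc i k ω) - gradient (f i) (x0 ω)‖ ^ 2) μ := by
      exact (integrable_finset_sum _ (fun i _ => integrable_finset_sum _
        (fun k _ => integrable_norm_sq (hdrift_L2 i k)))).const_mul _
    have hmono := integral_mono (μ := μ) (integrable_norm_sq hdriftsum_L2) hint2
      (fun ω => by
        have h1 := norm_sq_sum_le univ (fun i => ∑ k ∈ range K,
          (gradient (f i) (xloc i k ω) - gradient (f i) (x0 ω)))
        have h2 : ∑ i, ‖∑ k ∈ range K,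
            (gradient (f i) (xloc i k ω) - gradient (f i) (x0 ω))‖ ^ 2
            ≤ ∑ i, (K:ℝ) * ∑ k ∈ range K,
              ‖gradient (f i) (xloc i k ω) - gradient (f i) (x0 ω)‖ ^ 2 :=
          Finset.sum_le_sum (fun i _ => by
            simpa [Finset.card_range] using norm_sq_sum_le (range K)
              (fun k => gradient (f i) (xloc i k ω) - gradient (f i) (x0 ω)))
        have h3 : ∑ i, (K:ℝ) * ∑ k ∈ range K,
            ‖gradient (f i) (xloc i k ω) - gradient (f i) (x0 ω)‖ ^ 2
            = (K:ℝ) * ∑ i, ∑ k ∈ range K,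
              ‖gradient (f i) (xloc i k ω) - gradient (f i) (x0 ω)‖ ^ 2 :=
          (Finset.mul_sum _ _ _).symm
        simp only [Finset.card_univ, Fintype.card_fin] at h1
        calc ‖∑ i, ∑ k ∈ range K,
            (gradient (f i) (xloc i k ω) - gradient (f i) (x0 ω))‖ ^ 2
            ≤ (N:ℝ) * ∑ i, ‖∑ k ∈ range K,
              (gradient (f i) (xloc i k ω) - gradient (f i) (x0 ω))‖ ^ 2 := h1
          _ ≤ (N:ℝ) * ((K:ℝ) * ∑ i, ∑ k ∈ range K,
              ‖gradient (f i) (xloc i k ω) - gradient (f i) (x0 ω)‖ ^ 2) := by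
              rw [← h3]
              exact mul_le_mul_of_nonneg_left h2 hNpos.le
          _ = (N:ℝ) * (K:ℝ) * ∑ i, ∑ k ∈ range K,
              ‖gradient (f i) (xloc i k ω) - gradient (f i) (x0 ω)‖ ^ 2 := by ring)
    rw [integral_const_mul, integral_finset_sum _ (fun i _ => integrable_finset_sum _
      (fun k _ => integrable_norm_sq (hdrift_L2 i k)))] at hmono
    refine hmono.trans (le_of_eq ?_)
    congr 1
    refine Finset.sum_congr rfl fun i _ => ?_
    exact integral_finset_sum _ (fun k _ => integrable_norm_sq (hdrift_L2 i k))
  -- key pointwise decomposition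
  have hkey : ∀ ω, gradient (globalObjective N f) (x0 ω)
      - ((N:ℝ) * K)⁻¹ • ∑ i, ∑ k ∈ range K, g i k ω
      = -(((N:ℝ) * K)⁻¹ • ((∑ k ∈ range K, ∑ i, (g i k ω - gradient (f i) (xloc i k ω)))
        + ∑ i, ∑ k ∈ range K, (gradient (f i) (xloc i k ω) - gradient (f i) (x0 ω)))) := by
    intro ω
    rw [gradient_global f hdiff (x0 ω)]
    have h1 : (∑ k ∈ range K, ∑ i, (g i k ω - gradient (f i) (xloc i k ω)))
        = ∑ i, ∑ k ∈ range K, (g i k ω - gradient (f i) (xloc i k ω)) := Finset.sum_comm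
    rw [h1, ← Finset.sum_add_distrib]
    have h2 : ∀ i : Fin N, ((∑ k ∈ range K, (g i k ω - gradient (f i) (xloc i k ω)))
        + ∑ k ∈ range K, (gradient (f i) (xloc i k ω) - gradient (f i) (x0 ω)))
        = (∑ k ∈ range K, g i k ω) - (K:ℝ) • gradient (f i) (x0 ω) := by
      intro i
      rw [← Finset.sum_add_distrib]
      simp_rw [sub_add_sub_cancel]
      rw [Finset.sum_sub_distrib, Finset.sum_const, Finset.card_range]
      congr 1
      exact (Nat.cast_smul_eq_nsmul ℝ K _).symm
    rw [Finset.sum_congr rfl (fun i _ => h2 i), Finset.sum_sub_distrib]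
    have h3 : ∑ i : Fin N, (K:ℝ) • gradient (f i) (x0 ω)
        = (K:ℝ) • ∑ i, gradient (f i) (x0 ω) := (Finset.smul_sum).symm
    rw [h3, smul_sub, neg_sub]
    congr 1
    rw [smul_smul]
    congr 1
    field_simp
  -- assemble
  set G := ∫ ω, ‖gradient (globalObjective N f) (x0 ω)‖ ^ 2 ∂μ with hGdef
  set SB := 4 * ηl ^ 2 * (K:ℝ) ^ 2 * σl ^ 2 + 12 * ηl ^ 2 * (K:ℝ) ^ 3 * (σg ^ 2 + G)
    with hSBdef
  have hSBnn : 0 ≤ SB := by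
    rw [hSBdef]
    have h2 : 0 ≤ ηl ^ 2 * (K:ℝ) ^ 3 * (σg ^ 2 + G) := by
      refine mul_nonneg (by positivity) ?_
      linarith [sq_nonneg σg, hGnn]
    have h1 : 0 ≤ ηl ^ 2 * (K:ℝ) ^ 2 * σl ^ 2 := by positivity
    nlinarith [h1, h2]
  have hD : ∑ i, ∑ k ∈ range K,
      ∫ ω, ‖gradient (f i) (xloc i k ω) - gradient (f i) (x0 ω)‖ ^ 2 ∂μ
      ≤ (N:ℝ) * (L ^ 2 * SB) := by
    calc ∑ i, ∑ k ∈ range K,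
        ∫ ω, ‖gradient (f i) (xloc i k ω) - gradient (f i) (x0 ω)‖ ^ 2 ∂μ
        ≤ ∑ i, ∑ k ∈ range K, L ^ 2 * ∫ ω, ‖xloc i k ω - x0 ω‖ ^ 2 ∂μ :=
          Finset.sum_le_sum (fun i _ => Finset.sum_le_sum (fun k _ => hdriftint i k))
      _ = ∑ i : Fin N, L ^ 2 * ∑ k ∈ range K, ∫ ω, ‖xloc i k ω - x0 ω‖ ^ 2 ∂μ :=
          Finset.sum_congr rfl (fun i _ => (Finset.mul_sum _ _ _).symm)
      _ ≤ ∑ _i : Fin N, L ^ 2 * SB :=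
          Finset.sum_le_sum (fun i _ =>
            mul_le_mul_of_nonneg_left (hSbound i) (by positivity))
      _ = (N:ℝ) * (L ^ 2 * SB) := by
          rw [Finset.sum_const, Finset.card_univ, Fintype.card_fin, nsmul_eq_mul]
  have hnoisetot_L2 : MemLp (fun ω => ∑ k ∈ range K, ∑ i,
      (g i k ω - gradient (f i) (xloc i k ω))) 2 μ :=
    memLp_finset_sum _ (fun k _ => hY_L2 k)
  have hc_nn : (0:ℝ) ≤ ((N:ℝ) * K)⁻¹ := by positivity
  have hpt : ∀ ω, ‖gradient (globalObjective N f) (x0 ω)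
      - ((N:ℝ) * K)⁻¹ • ∑ i, ∑ k ∈ Finset.range K, g i k ω‖ ^ 2
      = (((N:ℝ) * K)⁻¹) ^ 2 * ‖(∑ k ∈ range K, ∑ i, (g i k ω - gradient (f i) (xloc i k ω)))
        + ∑ i, ∑ k ∈ range K, (gradient (f i) (xloc i k ω) - gradient (f i) (x0 ω))‖ ^ 2 := by
    intro ω
    rw [hkey ω, norm_neg, norm_smul, Real.norm_eq_abs, abs_of_nonneg hc_nn, mul_pow]
  have hXYint : ∫ ω, ‖(∑ k ∈ range K, ∑ i, (g i k ω - gradient (f i) (xloc i k ω)))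
      + ∑ i, ∑ k ∈ range K, (gradient (f i) (xloc i k ω) - gradient (f i) (x0 ω))‖ ^ 2 ∂μ
      ≤ 2 * ∫ ω, ‖∑ k ∈ range K, ∑ i, (g i k ω - gradient (f i) (xloc i k ω))‖ ^ 2 ∂μ
        + 2 * ∫ ω, ‖∑ i, ∑ k ∈ range K,
          (gradient (f i) (xloc i k ω) - gradient (f i) (x0 ω))‖ ^ 2 ∂μ := by
    have hi1 : Integrable (fun ω =>
        2 * ‖∑ k ∈ range K, ∑ i, (g i k ω - gradient (f i) (xloc i k ω))‖ ^ 2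
          + 2 * ‖∑ i, ∑ k ∈ range K,
            (gradient (f i) (xloc i k ω) - gradient (f i) (x0 ω))‖ ^ 2) μ := by
      exact ((integrable_norm_sq hnoisetot_L2).const_mul 2).add
        ((integrable_norm_sq hdriftsum_L2).const_mul 2)
    have hmono := integral_mono (μ := μ)
      (integrable_norm_sq (hnoisetot_L2.add hdriftsum_L2)) hi1
      (fun ω => norm_add_sq_le_two _ _)
    rwa [integral_add ((integrable_norm_sq hnoisetot_L2).const_mul 2)
      ((integrable_norm_sq hdriftsum_L2).const_mul 2),
      integral_const_mul, integral_const_mul] at hmono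
  have hmain : ∫ ω, ‖gradient (globalObjective N f) (x0 ω)
      - ((N:ℝ) * K)⁻¹ • ∑ i, ∑ k ∈ Finset.range K, g i k ω‖ ^ 2 ∂μ
      ≤ (((N:ℝ) * K)⁻¹) ^ 2 * (2 * ((K:ℝ) * ((N:ℝ) ^ 2 * σl ^ 2))
        + 2 * ((N:ℝ) * (K:ℝ) * ((N:ℝ) * (L ^ 2 * SB)))) := by
    have heq : ∫ ω, ‖gradient (globalObjective N f) (x0 ω)
        - ((N:ℝ) * K)⁻¹ • ∑ i, ∑ k ∈ Finset.range K, g i k ω‖ ^ 2 ∂μ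
        = (((N:ℝ) * K)⁻¹) ^ 2 * ∫ ω,
          ‖(∑ k ∈ range K, ∑ i, (g i k ω - gradient (f i) (xloc i k ω)))
          + ∑ i, ∑ k ∈ range K,
            (gradient (f i) (xloc i k ω) - gradient (f i) (x0 ω))‖ ^ 2 ∂μ := by
      simp_rw [hpt]
      exact integral_const_mul _ _
    rw [heq]
    have hBfull : ∫ ω, ‖∑ i, ∑ k ∈ range K,
        (gradient (f i) (xloc i k ω) - gradient (f i) (x0 ω))‖ ^ 2 ∂μ
        ≤ (N:ℝ) * (K:ℝ) * ((N:ℝ) * (L ^ 2 * SB)) :=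
      hB.trans (mul_le_mul_of_nonneg_left hD (by positivity))
    have := hXYint.trans (by linarith [hA, hBfull] :
      2 * ∫ ω, ‖∑ k ∈ range K, ∑ i, (g i k ω - gradient (f i) (xloc i k ω))‖ ^ 2 ∂μ
        + 2 * ∫ ω, ‖∑ i, ∑ k ∈ range K,
          (gradient (f i) (xloc i k ω) - gradient (f i) (x0 ω))‖ ^ 2 ∂μ
      ≤ 2 * ((K:ℝ) * ((N:ℝ) ^ 2 * σl ^ 2))
        + 2 * ((N:ℝ) * (K:ℝ) * ((N:ℝ) * (L ^ 2 * SB))))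
    exact mul_le_mul_of_nonneg_left this (by positivity)
  refine hmain.trans ?_
  have hsimp : (((N:ℝ) * K)⁻¹) ^ 2 * (2 * ((K:ℝ) * ((N:ℝ) ^ 2 * σl ^ 2))
      + 2 * ((N:ℝ) * (K:ℝ) * ((N:ℝ) * (L ^ 2 * SB))))
      = (2 * σl ^ 2 + 2 * L ^ 2 * SB) / (K:ℝ) := by
    field_simp
  rw [hsimp, div_le_iff₀ hKpos]
  have hsq256 : 1 / 256 ≤ ((K:ℝ) * L * ηl) ^ 2 := by nlinarith [hT_lb, hT_ub]
  have hGprod : (K:ℝ) * (((K:ℝ) * L * ηl) ^ 2 * G) ≤ (K:ℝ) * ((1 / 64) * G) :=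
    mul_le_mul_of_nonneg_left (mul_le_mul_of_nonneg_right hsq64 hGnn) hKpos.le
  have hσlprod : (1 / 256) * σl ^ 2 ≤ ((K:ℝ) * L * ηl) ^ 2 * σl ^ 2 :=
    mul_le_mul_of_nonneg_right hsq256 (sq_nonneg σl)
  have hσgnn : 0 ≤ L ^ 2 * ηl ^ 2 * (K:ℝ) ^ 3 * σg ^ 2 := by positivity
  rw [hSBdef]
  nlinarith [hGprod, hσlprod, hσgnn, hGnn, sq_nonneg σl, sq_nonneg σg, hKpos]
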